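/- Let (Ω, F, P) be a probability space with a filtration (F_j)_{j≥0}, let L : ℝ^p → ℝ be differentiable with L(θ) ≥ L_inf for all θ, and let (θ_j)_{j≥0} be an (F_j)-adapted sequence of ℝ^p-valued random vectors such that L(θ_j) and ‖∇L(θ_j)‖² are integrable for every j. Let (α_j)_{j≥0} be positive reals with Σ_j α_j = ∞ and Σ_j α_j² < ∞, and suppose there are constants U > 0 and C ≥ 0 such that for every j, E[L(θ_{j+1}) | F_j] ≤ L(θ_j) − α_j U ‖∇L(θ_j)‖² + α_j² C almost surely. Let A_K = Σ_{j=0}^{K−1} α_j. Then lim_{K→∞} E[(1/A_K) Σ_{j=0}^{K−1} α_j ‖∇L(θ_j)‖²] = 0, i.e., the weighted Cesàro averages of the squared gradient norms converge to zero in expectation. -/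

import Mathlib

open MeasureTheory Filter
open scoped MeasureTheory

/-- Convergence of the weighted Cesàro averages of squared gradient norms for SGD with
inexact gradients, under the conditional one-step descent inequality and Robbins–Monro
step sizes. -/
theorem stmt_14 (p : ℕ)
    {Ω : Type*} {m0 : MeasurableSpace Ω} (P : Measure Ω) [IsProbabilityMeasure P]
    (ℱ : Filtration ℕ m0)
    (Lf : EuclideanSpace ℝ (Fin p) → ℝ)
    (gradL : EuclideanSpace ℝ (Fin p) → EuclideanSpace ℝ (Fin p))
    (hgrad : ∀ x, HasGradientAt Lf (gradL x) x)
    (Linf : ℝ) (hlb : ∀ x, Linf ≤ Lf x)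
    (θ : ℕ → Ω → EuclideanSpace ℝ (Fin p))
    (hadapted : Adapted ℱ θ)
    (hLint : ∀ j, Integrable (fun ω => Lf (θ j ω)) P)
    (hGint : ∀ j, Integrable (fun ω => ‖gradL (θ j ω)‖ ^ 2) P)
    (α : ℕ → ℝ) (hαpos : ∀ j, 0 < α j)
    (hdiv : ¬ Summable α) (hsq : Summable (fun j => α j ^ 2))
    (U C : ℝ) (hU : 0 < U) (hC : 0 ≤ C)
    (hrec : ∀ j, P[fun ω => Lf (θ (j + 1) ω)|ℱ j] ≤ᵐ[P]
      fun ω => Lf (θ j ω) - α j * U * ‖gradL (θ j ω)‖ ^ 2 + α j ^ 2 * C) :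
    Tendsto
      (fun K => ∫ ω, (1 / (∑ j ∈ Finset.range K, α j)) *
        ∑ j ∈ Finset.range K, α j * ‖gradL (θ j ω)‖ ^ 2 ∂P)
      atTop (nhds 0) := by

  classical
  set E : ℕ → ℝ := fun j => ∫ ω, ‖gradL (θ j ω)‖ ^ 2 ∂P with hE
  have hEnn : ∀ j, 0 ≤ E j := fun j => integral_nonneg (fun ω => by positivity)
  -- one-step expected descent
  have hstep : ∀ j, ∫ ω, Lf (θ (j+1) ω) ∂P ≤
      ∫ ω, Lf (θ j ω) ∂P - α j * U * E j + α j ^ 2 * C := by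
    intro j
    have h1 : ∫ ω, Lf (θ (j+1) ω) ∂P = ∫ ω, (P[fun ω => Lf (θ (j + 1) ω)|ℱ j]) ω ∂P :=
      (integral_condExp (ℱ.le j)).symm
    have hint1 : Integrable (fun ω => Lf (θ j ω) - α j * U * ‖gradL (θ j ω)‖ ^ 2) P :=
      (hLint j).sub ((hGint j).const_mul _)
    have h2 : ∫ ω, (P[fun ω => Lf (θ (j + 1) ω)|ℱ j]) ω ∂P ≤
        ∫ ω, (Lf (θ j ω) - α j * U * ‖gradL (θ j ω)‖ ^ 2 + α j ^ 2 * C) ∂P :=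
      integral_mono_ae integrable_condExp (hint1.add (integrable_const _)) (hrec j)
    rw [h1]
    calc _ ≤ _ := h2
    _ = ∫ ω, Lf (θ j ω) ∂P - α j * U * E j + α j ^ 2 * C := by
        rw [integral_add hint1 (integrable_const _), integral_sub (hLint j)
          ((hGint j).const_mul _), integral_const_mul, integral_const]
        simp [hE]
  have hLlb : ∀ K, Linf ≤ ∫ ω, Lf (θ K ω) ∂P := by
    intro K
    calc Linf = ∫ _ω, Linf ∂P := by simp
    _ ≤ _ := integral_mono (integrable_const _) (hLint K) (fun ω => hlb _)
  -- telescoping bound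
  have key : ∀ K, ∫ ω, Lf (θ K ω) ∂P + U * ∑ j ∈ Finset.range K, α j * E j
      ≤ ∫ ω, Lf (θ 0 ω) ∂P + C * ∑ j ∈ Finset.range K, α j ^ 2 := by
    intro K
    induction K with
    | zero => simp
    | succ K ih =>
      have h := hstep K
      rw [Finset.sum_range_succ, Finset.sum_range_succ]
      nlinarith [h, ih]
  set S : ℝ := ∑' j, α j ^ 2 with hS
  set B : ℝ := ∫ ω, Lf (θ 0 ω) ∂P - Linf + C * S with hB
  have hsum_le : ∀ K, ∑ j ∈ Finset.range K, α j ^ 2 ≤ S :=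
    fun K => Summable.sum_le_tsum _ (fun j _ => sq_nonneg _) hsq
  have hbound : ∀ K, ∑ j ∈ Finset.range K, α j * E j ≤ B / U := by
    intro K
    rw [le_div_iff₀ hU]
    have h1 := key K
    have h2 := hLlb K
    have h3 := hsum_le K
    nlinarith
  set A : ℕ → ℝ := fun K => ∑ j ∈ Finset.range K, α j with hA
  have hAnn : ∀ K, 0 ≤ A K := fun K => Finset.sum_nonneg fun j _ => (hαpos j).le
  have hAt : Tendsto A atTop atTop :=
    (not_summable_iff_tendsto_nat_atTop_of_nonneg (fun j => (hαpos j).le)).mp hdiv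
  have hf : ∀ K, (∫ ω, (1 / A K) * ∑ j ∈ Finset.range K, α j * ‖gradL (θ j ω)‖ ^ 2 ∂P)
      = (1 / A K) * ∑ j ∈ Finset.range K, α j * E j := by
    intro K
    rw [integral_const_mul, integral_finset_sum _ (fun j _ => (hGint j).const_mul (α j))]
    simp_rw [integral_const_mul]
    rfl
  have hupper : Tendsto (fun K => (1 / A K) * (B / U)) atTop (nhds 0) := by
    have : Tendsto (fun K => 1 / A K) atTop (nhds 0) := by
      simpa [one_div, Pi.inv_def] using hAt.inv_tendsto_atTop
    simpa using this.mul_const (B / U)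
  apply squeeze_zero (g := fun K => (1 / A K) * (B / U))
  · intro K
    rw [hf]
    have : 0 ≤ 1 / A K := one_div_nonneg.mpr (hAnn K)
    exact mul_nonneg this (Finset.sum_nonneg fun j _ => mul_nonneg (hαpos j).le (hEnn j))
  · intro K
    rw [hf]
    exact mul_le_mul_of_nonneg_left (hbound K) (one_div_nonneg.mpr (hAnn K))
  · exact hupper
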